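/- Let λ be a composition of d. The family of Specht vectors {v_T : T a standard λ-tableau} is linearly independent in the free ℤ-module on λ-tabloids. -/

import Mathlib

open Equiv Finset

/-! A composition `λ = (λ_1, …, λ_n)` of `d` is encoded as `lam : Fin n → ℕ` (with, in the
theorems, the hypotheses `∀ i, 0 < lam i` and `∑ i, lam i = d`).  Enumerating the cells of the
Young diagram `[λ]` in row-reading order identifies them with `Fin d`: the cell `(i, j)` (with
`0 ≤ j < λ_i`, 0-indexed) corresponds to `psum lam i + j` where `psum lam i = λ_0 + ⋯ + λ_{i-1}`.
A `λ`-tableau `T : [λ] → {1, …, d}` is thus encoded as a permutation `T : Perm (Fin d)`, with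
`T k` the entry of the `k`-th cell; under this identification `T` itself is its own
row-reading word `w_T`. -/

/-- Partial sum `λ_0 + ⋯ + λ_{i-1}` of a composition. -/
def psum (n : ℕ) (lam : Fin n → ℕ) (i : Fin n) : ℕ :=
  ∑ j ∈ Finset.univ.filter (fun j : Fin n => j < i), lam j

/-- The cells (in row-reading coordinates) of the `i`-th row of the Young diagram of `lam`. -/
def rowCells (n d : ℕ) (lam : Fin n → ℕ) (i : Fin n) : Finset (Fin d) :=
  Finset.univ.filter fun k : Fin d =>
    psum n lam i ≤ (k : ℕ) ∧ (k : ℕ) < psum n lam i + lam i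

/-- The cells (in row-reading coordinates) of the `j`-th column of the Young diagram of `lam`. -/
def colCells (n d : ℕ) (lam : Fin n → ℕ) (j : ℕ) : Finset (Fin d) :=
  Finset.univ.filter fun k : Fin d => ∃ i : Fin n, (k : ℕ) = psum n lam i + j ∧ j < lam i

/-- A tableau is row standard if its entries increase along each row. -/
def RowStandard (n d : ℕ) (lam : Fin n → ℕ) (T : Perm (Fin d)) : Prop :=
  ∀ i : Fin n, ∀ k ∈ rowCells n d lam i, ∀ k' ∈ rowCells n d lam i, k < k' → T k < T k'

/-- A tableau is standard if its entries increase along each row and down each column. -/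
def Standard (n d : ℕ) (lam : Fin n → ℕ) (T : Perm (Fin d)) : Prop :=
  RowStandard n d lam T ∧
    ∀ i i' : Fin n, ∀ j : ℕ, ∀ k k' : Fin d,
      (k : ℕ) = psum n lam i + j → (k' : ℕ) = psum n lam i' + j →
      j < lam i → j < lam i' → i < i' → T k < T k'

/-- Two tableaux are row-equivalent if corresponding rows have equal entry sets. -/
def RowEquiv (n d : ℕ) (lam : Fin n → ℕ) (T T' : Perm (Fin d)) : Prop :=
  ∀ i : Fin n, (rowCells n d lam i).image T = (rowCells n d lam i).image T'

/-- Row-equivalence as a setoid on tableaux. -/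
def rowSetoid (n d : ℕ) (lam : Fin n → ℕ) : Setoid (Perm (Fin d)) :=
  ⟨RowEquiv n d lam,
    fun _ _ => rfl,
    fun h i => (h i).symm,
    fun h h' i => (h i).trans (h' i)⟩

/-- A tabloid is a row-equivalence class of tableaux. -/
def Tabloid (n d : ℕ) (lam : Fin n → ℕ) : Type :=
  Quotient (rowSetoid n d lam)

/-- The right action of `w ∈ Σ_d` on tableaux, `(T·w)(c) = w⁻¹(T(c))`. -/
def tabAct (d : ℕ) (T : Perm (Fin d)) (w : Perm (Fin d)) : Perm (Fin d) :=
  w⁻¹ * T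

/-- The column group `col(T)`: permutations of the entries preserving the entry set of each
column of `T`. -/
def colGroup (n d : ℕ) (lam : Fin n → ℕ) (T : Perm (Fin d)) : Set (Perm (Fin d)) :=
  {w | ∀ j : ℕ, ((colCells n d lam j).image T).image w = (colCells n d lam j).image T}

open scoped Classical in
/-- The Specht vector `v_T = ∑_{w ∈ col(T)} sgn(w) · {T·w}` in the free `ℤ`-module on
tabloids. -/
noncomputable def spechtVector (n d : ℕ) (lam : Fin n → ℕ) (T : Perm (Fin d)) :
    Tabloid n d lam →₀ ℤ :=
  ∑ w ∈ Finset.univ.filter (fun w => w ∈ colGroup n d lam T),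
    (Perm.sign w : ℤ) • Finsupp.single (Quotient.mk (rowSetoid n d lam) (tabAct d T w)) 1

/-- The length of a permutation: its number of inversions. -/
def invLength (d : ℕ) (w : Perm (Fin d)) : ℕ :=
  (Finset.univ.filter fun p : Fin d × Fin d => p.1 < p.2 ∧ w p.2 < w p.1).card

/-- The Bruhat order on `Σ_d`: `u ≤ w` iff `u` is obtained from `w` by repeatedly multiplying
by transpositions, decreasing the length at each step. -/
def BruhatLE (d : ℕ) (u w : Perm (Fin d)) : Prop :=
  Relation.ReflTransGen
    (fun x y => (∃ a b : Fin d, a ≠ b ∧ y = x * Equiv.swap a b) ∧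
      invLength d y < invLength d x) w u

/-- The Young subgroup `W_λ ≤ Σ_d`: permutations stabilizing each consecutive block
`B_i = {λ_0 + ⋯ + λ_{i-1}, …, λ_0 + ⋯ + λ_i - 1}` (0-indexed). -/
def youngSubgroup (n d : ℕ) (lam : Fin n → ℕ) : Subgroup (Perm (Fin d)) where
  carrier := {w | ∀ (i : Fin n) (k : Fin d), k ∈ rowCells n d lam i ↔ w k ∈ rowCells n d lam i}
  one_mem' := by intro i k; simp
  mul_mem' := by
    intro a b ha hb i k
    exact (hb i k).trans (ha i (b k))
  inv_mem' := by
    intro a ha i k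
    have := (ha i (a⁻¹ k)).symm
    simpa using this
section SpechtAux

variable {n d : ℕ} {lam : Fin n → ℕ}

lemma mem_rowCells' {i : Fin n} {k : Fin d} :
    k ∈ rowCells n d lam i ↔ psum n lam i ≤ (k : ℕ) ∧ (k : ℕ) < psum n lam i + lam i := by
  simp [rowCells]

lemma mem_colCells' {j : ℕ} {k : Fin d} :
    k ∈ colCells n d lam j ↔ ∃ i : Fin n, (k : ℕ) = psum n lam i + j ∧ j < lam i := by
  simp [colCells]

lemma psum_insert_eq (i : Fin n) :
    psum n lam i + lam i = ∑ j ∈ insert i (Finset.univ.filter (fun j : Fin n => j < i)), lam j := by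
  rw [Finset.sum_insert (by simp), add_comm, psum]

lemma psum_add_le {i i' : Fin n} (h : i < i') :
    psum n lam i + lam i ≤ psum n lam i' := by
  rw [psum_insert_eq, psum]
  refine Finset.sum_le_sum_of_subset ?_
  intro j hj
  simp only [Finset.mem_insert, Finset.mem_filter, Finset.mem_univ, true_and] at hj ⊢
  rcases hj with rfl | hj
  · exact h
  · exact hj.trans h

lemma row_unique {i i' : Fin n} {k : Fin d} (h : k ∈ rowCells n d lam i)
    (h' : k ∈ rowCells n d lam i') : i = i' := by
  rcases mem_rowCells'.1 h with ⟨h1, h2⟩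
  rcases mem_rowCells'.1 h' with ⟨h1', h2'⟩
  by_contra hne
  rcases lt_or_gt_of_ne hne with hlt | hlt
  · have := psum_add_le (lam := lam) hlt; omega
  · have := psum_add_le (lam := lam) hlt; omega

lemma psum_succ {i : Fin n} (h : i.val + 1 < n) :
    psum n lam ⟨i.val + 1, h⟩ = psum n lam i + lam i := by
  rw [psum_insert_eq, psum]
  congr 1
  ext j
  simp only [Finset.mem_filter, Finset.mem_univ, true_and, Finset.mem_insert, Fin.lt_def,
    Fin.ext_iff]
  omega

lemma row_exists (hpos : ∀ i, 0 < lam i) (hsum : ∑ i, lam i = d) (k : Fin d) :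
    ∃ i : Fin n, k ∈ rowCells n d lam i := by
  have hn : 0 < n := by
    rcases Nat.eq_zero_or_pos n with rfl | hn
    · have hk := k.isLt
      simp at hsum
      omega
    · exact hn
  set Sset := Finset.univ.filter (fun i : Fin n => psum n lam i ≤ (k : ℕ)) with hSset
  have h0 : psum n lam ⟨0, hn⟩ = 0 := by
    rw [psum]
    apply Finset.sum_eq_zero
    intro j hj
    simp only [Finset.mem_filter, Fin.lt_def] at hj
    omega
  have hne : Sset.Nonempty := ⟨⟨0, hn⟩, by simp [hSset, h0]⟩
  obtain ⟨i, hmemi, hmax⟩ : ∃ i ∈ Sset, ∀ j ∈ Sset, j ≤ i :=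
    ⟨Sset.max' hne, Sset.max'_mem hne, fun j hj => Sset.le_max' j hj⟩
  have hile : psum n lam i ≤ (k : ℕ) := by
    rw [hSset] at hmemi
    exact (Finset.mem_filter.1 hmemi).2
  refine ⟨i, mem_rowCells'.2 ⟨hile, ?_⟩⟩
  by_contra hlt
  push_neg at hlt
  by_cases hcase : i.val + 1 < n
  · have hps : psum n lam ⟨i.val + 1, hcase⟩ ≤ (k : ℕ) := by
      rw [psum_succ]; exact hlt
    have hmem : (⟨i.val + 1, hcase⟩ : Fin n) ∈ Sset := by simp [hSset, hps]
    have hle := hmax _ hmem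
    rw [Fin.le_def] at hle
    simp at hle
  · have huniv : insert i (Finset.univ.filter (fun j : Fin n => j < i)) = Finset.univ := by
      ext j
      simp only [Finset.mem_insert, Finset.mem_filter, Finset.mem_univ, true_and, iff_true,
        Fin.lt_def, Fin.ext_iff]
      have := j.isLt
      omega
    have : psum n lam i + lam i = d := by
      rw [psum_insert_eq, huniv, hsum]
    have := k.isLt
    omega

lemma rowCells_of_col {i : Fin n} {j : ℕ} {k : Fin d} (hk : (k : ℕ) = psum n lam i + j)
    (hj : j < lam i) : k ∈ rowCells n d lam i :=
  mem_rowCells'.2 ⟨by omega, by omega⟩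

lemma col_exists (hpos : ∀ i, 0 < lam i) (hsum : ∑ i, lam i = d) (k : Fin d) :
    ∃ j : ℕ, k ∈ colCells n d lam j := by
  obtain ⟨i, hi⟩ := row_exists hpos hsum k
  rcases mem_rowCells'.1 hi with ⟨h1, h2⟩
  exact ⟨(k : ℕ) - psum n lam i, mem_colCells'.2 ⟨i, by omega, by omega⟩⟩

end SpechtAux

/-- The row index (as a natural number) of a cell. -/
noncomputable def rowOf (n d : ℕ) (lam : Fin n → ℕ) (k : Fin d) : ℕ :=
  if h : ∃ i : Fin n, k ∈ rowCells n d lam i then ((h.choose : Fin n) : ℕ) else 0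

section SpechtAux2

variable {n d : ℕ} {lam : Fin n → ℕ}

lemma rowOf_eq {i : Fin n} {k : Fin d} (h : k ∈ rowCells n d lam i) :
    rowOf n d lam k = (i : ℕ) := by
  rw [rowOf, dif_pos ⟨i, h⟩]
  exact congrArg Fin.val (row_unique (Exists.choose_spec (⟨i, h⟩ : ∃ i, k ∈ rowCells n d lam i)) h)

end SpechtAux2

/-- A linear order on reversed-lex sequences. -/
noncomputable instance spechtLexLinearOrder (d : ℕ) : LinearOrder (Lex (Fin d → ℕ)) :=
  @Pi.Lex.linearOrder (Fin d) (fun _ => ℕ) (Fin.instLinearOrder)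
    (inferInstanceAs (WellFoundedLT (Fin d))) (fun _ => inferInstance)

/-- The reversed-lex invariant of a tableau: the sequence of row indices of the entries
`d, d-1, …, 1`, compared lexicographically. -/
noncomputable def FF (n d : ℕ) (lam : Fin n → ℕ) (S : Equiv.Perm (Fin d)) : Lex (Fin d → ℕ) :=
  toLex fun m => rowOf n d lam (S⁻¹ (Fin.rev m))

section SpechtAux3

variable {n d : ℕ} {lam : Fin n → ℕ}

lemma FF_congr (hpos : ∀ i, 0 < lam i) (hsum : ∑ i, lam i = d) {S T : Equiv.Perm (Fin d)}
    (h : RowEquiv n d lam S T) : FF n d lam S = FF n d lam T := by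
  have key : ∀ x : Fin d, rowOf n d lam (S⁻¹ x) = rowOf n d lam (T⁻¹ x) := by
    intro x
    obtain ⟨i, hi⟩ := row_exists hpos hsum (S⁻¹ x)
    have hx : x ∈ (rowCells n d lam i).image T := by
      rw [← h i]
      exact Finset.mem_image.2 ⟨S⁻¹ x, hi, by simp⟩
    obtain ⟨a, ha, hax⟩ := Finset.mem_image.1 hx
    have : T⁻¹ x ∈ rowCells n d lam i := by
      have : a = T⁻¹ x := by rw [← hax]; simp
      rwa [← this]
    rw [rowOf_eq hi, rowOf_eq this]
  unfold FF
  congr 1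
  funext m
  exact key _

lemma one_mem_colGroup (S : Equiv.Perm (Fin d)) : (1 : Equiv.Perm (Fin d)) ∈ colGroup n d lam S := by
  intro j
  simp [Finset.image_id]

lemma FF_lt (hpos : ∀ i, 0 < lam i) (hsum : ∑ i, lam i = d) {S w : Equiv.Perm (Fin d)}
    (hS : Standard n d lam S) (hw : w ∈ colGroup n d lam S) (hne : w ≠ 1) :
    FF n d lam (tabAct d S w) < FF n d lam S := by
  classical
  have hex : ∃ x : Fin d, w x ≠ x := by
    by_contra hcon
    push_neg at hcon
    exact hne (Equiv.ext hcon)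
  set M := Finset.univ.filter (fun x : Fin d => w x ≠ x) with hM
  have hMne : M.Nonempty := ⟨hex.choose, by simp [hM, hex.choose_spec]⟩
  obtain ⟨x0, hx0mem, hx0max⟩ : ∃ x ∈ M, ∀ y ∈ M, y ≤ x :=
    ⟨M.max' hMne, M.max'_mem hMne, fun y hy => M.le_max' y hy⟩
  have hx0 : w x0 ≠ x0 := by
    rw [hM] at hx0mem
    exact (Finset.mem_filter.1 hx0mem).2
  have hfix : ∀ y : Fin d, x0 < y → w y = y := by
    intro y hy
    by_contra hy'
    exact absurd (hx0max y (by simp [hM, hy'])) (not_le.2 hy)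
  have hwx0_moved : w (w x0) ≠ w x0 := fun hcon => hx0 (w.injective hcon)
  have hwx0_lt : w x0 < x0 :=
    lt_of_le_of_ne (hx0max _ (by simp [hM, hwx0_moved])) hx0
  obtain ⟨j, hj⟩ := col_exists hpos hsum (S⁻¹ x0)
  have hx0mem : x0 ∈ (colCells n d lam j).image S :=
    Finset.mem_image.2 ⟨S⁻¹ x0, hj, by simp⟩
  have hwx0mem : w x0 ∈ (colCells n d lam j).image S := by
    rw [← hw j]
    exact Finset.mem_image_of_mem w hx0mem
  obtain ⟨k1, hk1c, hk1⟩ := Finset.mem_image.1 hwx0mem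
  have hk1' : k1 = S⁻¹ (w x0) := by rw [← hk1]; simp
  obtain ⟨i1, hi1, hji1⟩ := mem_colCells'.1 hk1c
  obtain ⟨i2, hi2, hji2⟩ := mem_colCells'.1 hj
  have hi_ne : i1 ≠ i2 := by
    rintro rfl
    have hkk : k1 = S⁻¹ x0 := Fin.ext (by omega)
    rw [hkk] at hk1
    simp at hk1
    exact hx0 hk1.symm
  have hlt12 : i1 < i2 := by
    rcases lt_or_gt_of_ne hi_ne with hcase | hcase
    · exact hcase
    · exfalso
      have := hS.2 i2 i1 j (S⁻¹ x0) k1 hi2 hi1 hji2 hji1 hcase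
      rw [hk1] at this
      simp at this
      exact absurd this (not_lt.2 hwx0_lt.le)
  have e1 : rowOf n d lam (S⁻¹ (w x0)) = (i1 : ℕ) := by
    rw [← hk1']
    exact rowOf_eq (rowCells_of_col hi1 hji1)
  have e2 : rowOf n d lam (S⁻¹ x0) = (i2 : ℕ) := rowOf_eq (rowCells_of_col hi2 hji2)
  have hact : ∀ y : Fin d, (tabAct d S w)⁻¹ y = S⁻¹ (w y) := by
    intro y
    simp [tabAct, mul_inv_rev]
  refine ⟨Fin.rev x0, ?_, ?_⟩
  · intro m hm
    have hgt : x0 < Fin.rev m := by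
      have := Fin.rev_lt_rev.mpr hm
      rwa [Fin.rev_rev] at this
    show rowOf n d lam ((tabAct d S w)⁻¹ (Fin.rev m)) = rowOf n d lam (S⁻¹ (Fin.rev m))
    rw [hact, hfix _ hgt]
  · show rowOf n d lam ((tabAct d S w)⁻¹ (Fin.rev (Fin.rev x0)))
        < rowOf n d lam (S⁻¹ (Fin.rev (Fin.rev x0)))
    rw [Fin.rev_rev, hact, e1, e2]
    exact hlt12

lemma standard_rowEquiv_eq (hpos : ∀ i, 0 < lam i) (hsum : ∑ i, lam i = d)
    {S T : Equiv.Perm (Fin d)} (hS : RowStandard n d lam S) (hT : RowStandard n d lam T)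
    (h : RowEquiv n d lam S T) : S = T := by
  apply Equiv.ext
  intro k
  obtain ⟨i, hi⟩ := row_exists hpos hsum k
  set s := rowCells n d lam i with hs
  set t := s.image S with ht
  have hcard : t.card = s.card := Finset.card_image_of_injective _ S.injective
  have hfs : ∀ x : Fin s.card, (S ∘ s.orderEmbOfFin rfl) x ∈ t := fun x =>
    Finset.mem_image_of_mem _ (Finset.orderEmbOfFin_mem s rfl x)
  have hmonoS : StrictMono (S ∘ s.orderEmbOfFin rfl) := fun a b hab =>
    hS i _ (Finset.orderEmbOfFin_mem s rfl a) _ (Finset.orderEmbOfFin_mem s rfl b)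
      ((s.orderEmbOfFin rfl).strictMono hab)
  have hUS : (S ∘ s.orderEmbOfFin rfl) = t.orderEmbOfFin hcard :=
    Finset.orderEmbOfFin_unique hcard hfs hmonoS
  have hft : ∀ x : Fin s.card, (T ∘ s.orderEmbOfFin rfl) x ∈ t := fun x => by
    rw [ht, h i]
    exact Finset.mem_image_of_mem _ (Finset.orderEmbOfFin_mem s rfl x)
  have hmonoT : StrictMono (T ∘ s.orderEmbOfFin rfl) := fun a b hab =>
    hT i _ (Finset.orderEmbOfFin_mem s rfl a) _ (Finset.orderEmbOfFin_mem s rfl b)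
      ((s.orderEmbOfFin rfl).strictMono hab)
  have hUT : (T ∘ s.orderEmbOfFin rfl) = t.orderEmbOfFin hcard :=
    Finset.orderEmbOfFin_unique hcard hft hmonoT
  have hk : k ∈ Set.range (s.orderEmbOfFin rfl) := by
    rw [Finset.range_orderEmbOfFin]
    exact hi
  obtain ⟨x, hx⟩ := hk
  calc S k = (S ∘ s.orderEmbOfFin rfl) x := by rw [Function.comp_apply, hx]
    _ = (T ∘ s.orderEmbOfFin rfl) x := by rw [hUS, hUT]
    _ = T k := by rw [Function.comp_apply, hx]

end SpechtAux3


/-- for a composition `λ` of `d`, the Specht vectors `v_T`, for `T` ranging over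
the standard `λ`-tableaux, are linearly independent in the free `ℤ`-module on
`λ`-tabloids. -/
theorem specht_vectors_of_standard_tableaux_linearly_independent
    (n d : ℕ) (lam : Fin n → ℕ) (hpos : ∀ i, 0 < lam i) (hsum : ∑ i, lam i = d) :
    LinearIndependent ℤ
      (fun T : {T : Perm (Fin d) // Standard n d lam T} => spechtVector n d lam T.1) := by
  classical
  rw [linearIndependent_iff']
  intro s g hg T hT
  by_contra hgT
  set s' := s.filter (fun S => g S ≠ 0) with hs'
  have hs'ne : s'.Nonempty := ⟨T, by simp [hs', hT, hgT]⟩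
  obtain ⟨T0, hT0mem, hT0max⟩ := Finset.exists_max_image s' (fun S => FF n d lam S.1) hs'ne
  have hT0s : T0 ∈ s := Finset.mem_of_mem_filter _ hT0mem
  have hgT0 : g T0 ≠ 0 := (Finset.mem_filter.1 hT0mem).2
  set q0 : Tabloid n d lam := Quotient.mk (rowSetoid n d lam) T0.1 with hq0
  have key : ∀ S : {T : Perm (Fin d) // Standard n d lam T}, S ∈ s' →
      (spechtVector n d lam S.1) q0 = if S = T0 then 1 else 0 := by
    intro S hSmem
    have hmax := hT0max S hSmem
    rw [spechtVector]
    erw [Finsupp.finset_sum_apply]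
    by_cases hcase : S = T0
    · subst hcase
      rw [if_pos rfl]
      rw [Finset.sum_eq_single_of_mem (1 : Perm (Fin d))
        (Finset.mem_filter.2 ⟨Finset.mem_univ _, one_mem_colGroup _⟩)]
      · erw [Finsupp.smul_apply]
        simp [tabAct, Finsupp.single_apply, hq0]
        exact Finsupp.single_eq_same
      · intro w hwmem hwne
        have hw : w ∈ colGroup n d lam S.1 := (Finset.mem_filter.1 hwmem).2
        erw [Finsupp.smul_apply, Finsupp.single_apply, if_neg, smul_zero]
        intro heq
        have hre : RowEquiv n d lam (tabAct d S.1 w) S.1 := Quotient.exact heq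
        have hlt := FF_lt hpos hsum S.2 hw hwne
        rw [FF_congr hpos hsum hre] at hlt
        exact lt_irrefl _ hlt
    · rw [if_neg hcase]
      apply Finset.sum_eq_zero
      intro w hwmem
      have hw : w ∈ colGroup n d lam S.1 := (Finset.mem_filter.1 hwmem).2
      erw [Finsupp.smul_apply, Finsupp.single_apply, if_neg, smul_zero]
      intro heq
      have hre : RowEquiv n d lam (tabAct d S.1 w) T0.1 := Quotient.exact heq
      by_cases hwone : w = 1
      · subst hwone
        have hre' : RowEquiv n d lam S.1 T0.1 := by
          have : tabAct d S.1 1 = S.1 := by simp [tabAct]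
          rwa [this] at hre
        exact hcase (Subtype.ext (standard_rowEquiv_eq hpos hsum S.2.1 T0.2.1 hre'))
      · have h1 := FF_lt hpos hsum S.2 hw hwone
        rw [FF_congr hpos hsum hre] at h1
        exact absurd hmax (not_le.2 h1)
  have h0 := congrArg (fun f : Tabloid n d lam →₀ ℤ => f q0) hg
  simp only [Finsupp.coe_zero, Pi.zero_apply] at h0
  rw [Finsupp.finset_sum_apply, Finset.sum_eq_single_of_mem T0 hT0s] at h0
  · rw [Finsupp.smul_apply, key T0 hT0mem, if_pos rfl] at h0
    simp at h0
    exact hgT0 h0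
  · intro S hSs hSne
    rw [Finsupp.smul_apply]
    by_cases hgS : g S = 0
    · rw [hgS, zero_smul]
    · rw [key S (Finset.mem_filter.2 ⟨hSs, hgS⟩), if_neg hSne, smul_zero]
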